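/- Let $u$ be a smooth solution of $\partial_t u = \mathcal{L}_\phi u$ on a closed manifold $M$ for $t \in [a,b]$ with $I(t) > 0$ on $[a,b]$. Then $I(b) \geq I(a)\, e^{2 U(a)(b-a)}$, where $U(a) = D(a)/I(a) \leq 0$. -/
import Mathlib


/- STATEMENT 6.  Abstract closed-manifold setting (μ = e^{-φ} dV_g, gradu = ∇u,
Lu = 𝓛_φ u, gradLu = ∇𝓛_φ u).  With I(t) = ∫ |u|² e^{-φ}, D(t) = -∫ |∇u|² e^{-φ},
U(a) = D(a)/I(a) ≤ 0, one has I(b) ≥ I(a) e^{2 U(a) (b-a)}. -/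
open MeasureTheory
open scoped RealInnerProductSpace

/-- Cauchy–Schwarz for real integrals. -/
lemma integral_sq_cauchy {M : Type*} [MeasurableSpace M] (μ : Measure M)
    (f g : M → ℝ) (hf : Integrable (fun x => (f x) ^ 2) μ)
    (hg : Integrable (fun x => (g x) ^ 2) μ)
    (hfg : Integrable (fun x => f x * g x) μ)
    (hA : 0 < ∫ x, (f x) ^ 2 ∂μ) :
    (∫ x, f x * g x ∂μ) ^ 2 ≤ (∫ x, (f x) ^ 2 ∂μ) * (∫ x, (g x) ^ 2 ∂μ) := by
  set A := ∫ x, (f x) ^ 2 ∂μ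
  set B := ∫ x, f x * g x ∂μ
  set C := ∫ x, (g x) ^ 2 ∂μ
  have key : ∀ l : ℝ, 0 ≤ l ^ 2 * A + 2 * l * B + C := by
    intro l
    have h1 : 0 ≤ ∫ x, (l * f x + g x) ^ 2 ∂μ :=
      integral_nonneg fun x => sq_nonneg _
    have h2 : ∫ x, (l * f x + g x) ^ 2 ∂μ = l ^ 2 * A + 2 * l * B + C := by
      have e : (fun x => (l * f x + g x) ^ 2)
          = fun x => (l ^ 2 * (f x) ^ 2 + 2 * l * (f x * g x)) + (g x) ^ 2 := by
        funext x; ring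
      have i1 : Integrable (fun x => l ^ 2 * (f x) ^ 2 + 2 * l * (f x * g x)) μ :=
        (hf.const_mul _).add (hfg.const_mul _)
      rw [e, integral_add i1 hg, integral_add (hf.const_mul _) (hfg.const_mul _),
        integral_const_mul, integral_const_mul]
    rw [h2] at h1; exact h1
  have h := key (-B / A)
  have hA' : A ≠ 0 := ne_of_gt hA
  have : (-B / A) ^ 2 * A + 2 * (-B / A) * B + C = C - B ^ 2 / A := by
    field_simp; ring
  rw [this] at h
  have : B ^ 2 / A ≤ C := by linarith
  calc B ^ 2 = (B ^ 2 / A) * A := by field_simp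
    _ ≤ C * A := by apply mul_le_mul_of_nonneg_right this hA.le
    _ = A * C := mul_comm _ _

theorem I_exponential_lower_bound
    {M : Type*} [MeasurableSpace M] (μ : Measure M) [IsFiniteMeasure μ]
    {V : Type*} [NormedAddCommGroup V] [InnerProductSpace ℝ V]
    (a b : ℝ) (hab : a ≤ b)
    (u Lu : ℝ → M → ℝ) (gradu gradLu : ℝ → M → V)
    (hu2 : ∀ t, Integrable (fun x => (u t x) ^ 2) μ)
    (hgrad2 : ∀ t, Integrable (fun x => ‖gradu t x‖ ^ 2) μ)
    (hLu2 : ∀ t, Integrable (fun x => (Lu t x) ^ 2) μ)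
    (huLu : ∀ t, Integrable (fun x => u t x * Lu t x) μ)
    (hgg : ∀ t, Integrable (fun x => ⟪gradu t x, gradLu t x⟫) μ)
    -- the drift heat equation ∂ₜ u = 𝓛_φ u
    (hheat : ∀ x t, HasDerivAt (fun s => u s x) (Lu t x) t)
    -- self-adjointness of 𝓛_φ (integration by parts on the closed manifold)
    (hibp : ∀ t, ∫ x, u t x * Lu t x ∂μ = -∫ x, ‖gradu t x‖ ^ 2 ∂μ)
    (hibp2 : ∀ t, ∫ x, ⟪gradu t x, gradLu t x⟫ ∂μ = -∫ x, (Lu t x) ^ 2 ∂μ)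
    -- differentiation under the integral sign for I and D
    (hDI : ∀ t ∈ Set.Icc a b,
      HasDerivAt (fun s => ∫ x, (u s x) ^ 2 ∂μ)
        (∫ x, 2 * (u t x * Lu t x) ∂μ) t)
    (hDD : ∀ t ∈ Set.Icc a b,
      HasDerivAt (fun s => -∫ x, ‖gradu s x‖ ^ 2 ∂μ)
        (-∫ x, 2 * ⟪gradu t x, gradLu t x⟫ ∂μ) t)
    -- positivity of I on [a,b]
    (hIpos : ∀ t ∈ Set.Icc a b, 0 < ∫ x, (u t x) ^ 2 ∂μ) :
    (∫ x, (u b x) ^ 2 ∂μ) ≥ (∫ x, (u a x) ^ 2 ∂μ) *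
      Real.exp (2 * ((-∫ x, ‖gradu a x‖ ^ 2 ∂μ) / (∫ x, (u a x) ^ 2 ∂μ)) * (b - a)) := by
  set I : ℝ → ℝ := fun t => ∫ x, (u t x) ^ 2 ∂μ with hI
  set D : ℝ → ℝ := fun t => -∫ x, ‖gradu t x‖ ^ 2 ∂μ with hD
  set Q : ℝ → ℝ := fun t => D t / I t with hQ
  have hab' : a ∈ Set.Icc a b := ⟨le_refl a, hab⟩
  have hbb : b ∈ Set.Icc a b := ⟨hab, le_refl b⟩
  -- derivative of I equals 2 D
  have hI' : ∀ t ∈ Set.Icc a b, HasDerivAt I (2 * D t) t := by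
    intro t ht
    have h := hDI t ht
    have e : ∫ x, 2 * (u t x * Lu t x) ∂μ = 2 * D t := by
      rw [integral_const_mul, hibp t]
    rwa [e] at h
  -- derivative of D equals 2 ∫ (Lu)²
  have hD' : ∀ t ∈ Set.Icc a b,
      HasDerivAt D (2 * ∫ x, (Lu t x) ^ 2 ∂μ) t := by
    intro t ht
    have h := hDD t ht
    have e : -∫ x, 2 * ⟪gradu t x, gradLu t x⟫ ∂μ = 2 * ∫ x, (Lu t x) ^ 2 ∂μ := by
      rw [integral_const_mul, hibp2 t]; ring
    rwa [e] at h
  -- derivative of Q and its nonnegativity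
  have hQ' : ∀ t ∈ Set.Icc a b,
      HasDerivAt Q ((2 * (∫ x, (Lu t x) ^ 2 ∂μ) * I t - D t * (2 * D t)) / (I t) ^ 2) t := by
    intro t ht
    exact (hD' t ht).div (hI' t ht) (ne_of_gt (hIpos t ht))
  have hQnonneg : ∀ t ∈ Set.Icc a b,
      0 ≤ (2 * (∫ x, (Lu t x) ^ 2 ∂μ) * I t - D t * (2 * D t)) / (I t) ^ 2 := by
    intro t ht
    apply div_nonneg _ (sq_nonneg _)
    have cs := integral_sq_cauchy μ (u t) (Lu t) (hu2 t) (hLu2 t) (huLu t) (hIpos t ht)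
    have hDt : D t = ∫ x, u t x * Lu t x ∂μ := (hibp t).symm
    rw [hDt]
    nlinarith [cs]
  -- Q is monotone on [a,b]
  have hQmono : MonotoneOn Q (Set.Icc a b) := by
    apply monotoneOn_of_deriv_nonneg (convex_Icc a b)
    · intro t ht
      exact (hQ' t ht).continuousAt.continuousWithinAt
    · intro t ht
      rw [interior_Icc] at ht
      exact (hQ' t (Set.Ioo_subset_Icc_self ht)).differentiableAt.differentiableWithinAt
    · intro t ht
      rw [interior_Icc] at ht
      rw [(hQ' t (Set.Ioo_subset_Icc_self ht)).deriv]
      exact hQnonneg t (Set.Ioo_subset_Icc_self ht)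
  -- F t = log (I t) - 2 Q a * t is monotone on [a,b]
  set F : ℝ → ℝ := fun t => Real.log (I t) - 2 * Q a * t with hF
  have hF' : ∀ t ∈ Set.Icc a b, HasDerivAt F (2 * Q t - 2 * Q a) t := by
    intro t ht
    have hlog : HasDerivAt (fun s => Real.log (I s)) (2 * D t / I t) t :=
      (hI' t ht).log (ne_of_gt (hIpos t ht))
    have hlin : HasDerivAt (fun s : ℝ => 2 * Q a * s) (2 * Q a) t := by
      simpa using (hasDerivAt_id t).const_mul (2 * Q a)
    have := hlog.sub hlin
    have e : 2 * D t / I t - 2 * Q a = 2 * Q t - 2 * Q a := by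
      rw [hQ]; ring
    rwa [e] at this
  have hFmono : MonotoneOn F (Set.Icc a b) := by
    apply monotoneOn_of_deriv_nonneg (convex_Icc a b)
    · intro t ht
      exact (hF' t ht).continuousAt.continuousWithinAt
    · intro t ht
      rw [interior_Icc] at ht
      exact (hF' t (Set.Ioo_subset_Icc_self ht)).differentiableAt.differentiableWithinAt
    · intro t ht
      rw [interior_Icc] at ht
      have ht' := Set.Ioo_subset_Icc_self ht
      rw [(hF' t ht').deriv]
      have := hQmono hab' ht' ht.1.le
      linarith
  have hFab : F a ≤ F b := hFmono hab' hbb hab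
  have hlog : Real.log (I a) + 2 * Q a * (b - a) ≤ Real.log (I b) := by
    simp only [hF] at hFab
    linarith
  have hIb : I b = Real.exp (Real.log (I b)) := (Real.exp_log (hIpos b hbb)).symm
  calc I a * Real.exp (2 * Q a * (b - a))
      = Real.exp (Real.log (I a) + 2 * Q a * (b - a)) := by
        rw [Real.exp_add, Real.exp_log (hIpos a hab')]
    _ ≤ Real.exp (Real.log (I b)) := Real.exp_le_exp.mpr hlog
    _ = I b := hIb.symm
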